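/- Let m ≥ 1 and let l : (Fin m → ℝ) → ℂ be continuous, and suppose there exists l_min > 0 with l_min ≤ ‖l ξ‖ for all ξ, and that ‖l ξ‖ → ∞ along the cocompact filter on Fin m → ℝ. Let 0 < d ≤ b be reals. Then for every ε > 0 there exists η > 0 such that for all q, q' ∈ [d, b] with |q − q'| ≤ η and every n : Fin m → ℤ, ‖(l ((2q)⁻¹ • (fun i => (n i : ℝ))))⁻¹ − (l ((2q')⁻¹ • (fun i => (n i : ℝ))))⁻¹‖ ≤ ε. -/

import Mathlib

/-- Uniform (in the index `n`) continuity in `q ∈ [d, b]` of the entries `l(n/(2q))⁻¹` of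
the inverse diagonal operators `L_q⁻¹`, for a continuous symbol `l` bounded below in norm
and blowing up at infinity. -/
theorem inverse_diagonal_entries_uniformly_continuous
    (m : ℕ) (hm : 1 ≤ m)
    (l : (Fin m → ℝ) → ℂ) (hl : Continuous l)
    (lmin : ℝ) (hlmin : 0 < lmin) (hlb : ∀ ξ : Fin m → ℝ, lmin ≤ ‖l ξ‖)
    (hcoc : Filter.Tendsto (fun ξ : Fin m → ℝ => ‖l ξ‖)
      (Filter.cocompact (Fin m → ℝ)) Filter.atTop)
    (d b : ℝ) (hd : 0 < d) (hdb : d ≤ b) :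
    ∀ ε > (0 : ℝ), ∃ η > (0 : ℝ), ∀ q q' : ℝ,
      q ∈ Set.Icc d b → q' ∈ Set.Icc d b → |q - q'| ≤ η →
      ∀ n : Fin m → ℤ,
        ‖(l ((2 * q)⁻¹ • fun i => (n i : ℝ)))⁻¹ -
            (l ((2 * q')⁻¹ • fun i => (n i : ℝ)))⁻¹‖ ≤ ε := by
  intro ε hε
  -- far region: choose R so that ‖l ξ‖ ≥ 2/ε whenever ‖ξ‖ > R
  have h2ε : (0:ℝ) < 2/ε := by positivity
  have hmem : {ξ : Fin m → ℝ | 2/ε ≤ ‖l ξ‖} ∈ Filter.cocompact (Fin m → ℝ) :=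
    hcoc (Filter.mem_atTop (2/ε))
  obtain ⟨K, hK, hKsub⟩ := Filter.mem_cocompact.mp hmem
  obtain ⟨R₀, hR₀⟩ := hK.isBounded.subset_closedBall 0
  set R : ℝ := max R₀ 0 with hRdef
  have hR0 : 0 ≤ R := le_max_right _ _
  have hfar : ∀ ξ : Fin m → ℝ, R < ‖ξ‖ → 2/ε ≤ ‖l ξ‖ := by
    intro ξ hξ
    apply hKsub
    intro hmemK
    have := hR₀ hmemK
    rw [Metric.mem_closedBall, dist_zero_right] at this
    exact absurd this (not_le.mpr (lt_of_le_of_lt (le_max_left _ _) hξ))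
  -- compact region: uniform continuity
  set K2 : Set (ℝ × (Fin m → ℝ)) := Set.Icc d b ×ˢ Metric.closedBall 0 (2*b*R) with hK2def
  have hK2 : IsCompact K2 := isCompact_Icc.prod (isCompact_closedBall _ _)
  have hlne : ∀ ξ : Fin m → ℝ, l ξ ≠ 0 := by
    intro ξ h0
    have := hlb ξ
    rw [h0, norm_zero] at this
    linarith
  have hF : ContinuousOn (fun p : ℝ × (Fin m → ℝ) => (l ((2*p.1)⁻¹ • p.2))⁻¹) K2 := by
    apply ContinuousOn.inv₀
    · apply hl.comp_continuousOn
      refine ContinuousOn.smul (f := fun p : ℝ × (Fin m → ℝ) => (2*p.1)⁻¹) (g := fun p => p.2) ?_ ?_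
      · apply ContinuousOn.inv₀
        · exact (continuous_const.mul continuous_fst).continuousOn
        · intro p hp
          have h1 : d ≤ p.1 := hp.1.1
          exact ne_of_gt (by linarith)
      · exact continuousOn_snd
    · intro p _
      exact hlne _
  have hUC := hK2.uniformContinuousOn_of_continuous hF
  rw [Metric.uniformContinuousOn_iff] at hUC
  obtain ⟨δ, hδ, hδ'⟩ := hUC ε hε
  refine ⟨δ/2, by linarith, ?_⟩
  intro q q' hq hq' hqq' n
  set x : Fin m → ℝ := fun i => (n i : ℝ) with hxdef
  by_cases hx : ‖x‖ ≤ 2*b*R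
  · have h1 : (q, x) ∈ K2 := ⟨hq, by simpa [Metric.mem_closedBall, dist_zero_right] using hx⟩
    have h2 : (q', x) ∈ K2 := ⟨hq', by simpa [Metric.mem_closedBall, dist_zero_right] using hx⟩
    have hd2 : dist (q, x) (q', x) < δ := by
      rw [Prod.dist_eq]
      simp only [dist_self]
      rw [Real.dist_eq]
      have : |q - q'| < δ := lt_of_le_of_lt hqq' (by linarith)
      simp [this, hδ]
    have := hδ' _ h1 _ h2 hd2
    rw [dist_eq_norm] at this
    exact this.le
  · push_neg at hx
    have key : ∀ c : ℝ, c ∈ Set.Icc d b → ‖(l ((2*c)⁻¹ • x))⁻¹‖ ≤ ε/2 := by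
      intro c hc
      have hc0 : 0 < c := lt_of_lt_of_le hd hc.1
      have hnorm : R < ‖(2*c)⁻¹ • x‖ := by
        rw [norm_smul, norm_inv, Real.norm_eq_abs, abs_of_pos (by linarith)]
        rw [inv_mul_eq_div, lt_div_iff₀ (by linarith)]
        nlinarith [hc.2]
      have hlx : 2/ε ≤ ‖l ((2*c)⁻¹ • x)‖ := hfar _ hnorm
      rw [norm_inv]
      calc ‖l ((2*c)⁻¹ • x)‖⁻¹ ≤ (2/ε)⁻¹ := by
            apply inv_anti₀ h2ε hlx
        _ = ε/2 := by field_simp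
    calc ‖(l ((2 * q)⁻¹ • fun i => (n i : ℝ)))⁻¹ -
            (l ((2 * q')⁻¹ • fun i => (n i : ℝ)))⁻¹‖
        ≤ ‖(l ((2 * q)⁻¹ • x))⁻¹‖ + ‖(l ((2 * q')⁻¹ • x))⁻¹‖ := norm_sub_le _ _
      _ ≤ ε/2 + ε/2 := add_le_add (key q hq) (key q' hq')
      _ = ε := by ring
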